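/- Let (V1,…,Vn) be a U_n-twisted isometry on H, A ⊆ {1,…,n}, and j ∉ A. Then the orthogonal complement of V_j W_A inside W_A equals W_{A ∪ {j}}; that is, W_A ⊖ V_j W_A = W_A ∩ ker V_j*. -/

import Mathlib

open ContinuousLinearMap

lemma aux_comm_star {H : Type*} [NormedAddCommGroup H] [InnerProductSpace ℂ H] [CompleteSpace H]
    (a u : H →L[ℂ] H) (hu1 : u * star u = 1) (hu2 : star u * u = 1)
    (hau : a * u = u * a) : star a * u = u * star a := by
  have h1 : star u * star a = star a * star u := by
    have := congrArg star hau
    simpa [star_mul] using this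
  calc star a * u = u * star u * (star a * u) := by rw [hu1, one_mul]
    _ = u * (star u * star a * u) := by simp only [mul_assoc]
    _ = u * (star a * (star u * u)) := by rw [h1]; simp only [mul_assoc]
    _ = u * star a := by rw [hu2, mul_one]

lemma aux_key {H : Type*} [NormedAddCommGroup H] [InnerProductSpace ℂ H] [CompleteSpace H]
    (a b u : H →L[ℂ] H)
    (ha : star a * a = 1) (hb : star b * b = 1)
    (hu1 : u * star u = 1) (hu2 : star u * u = 1)
    (hau : a * u = u * a) (hbu : b * u = u * b)
    (hab : star a * b = star u * (b * star a))
    (hba : star b * a = u * (a * star b)) :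
    b * a = star u * (a * b) := by
  have hau' : star a * u = u * star a := aux_comm_star a u hu1 hu2 hau
  have hau_s : star a * star u = star u * star a := by
    have := congrArg star hau; simpa [star_mul] using this.symm
  have hbu_s : star b * star u = star u * star b := by
    have := congrArg star hbu; simpa [star_mul] using this.symm
  set D := b * a - star u * (a * b) with hD
  have hpr : star a * (star b * (b * a)) = 1 := by
    rw [← mul_assoc (star b) b a, hb, one_mul, ha]
  have hps : star a * (star b * (star u * (a * b))) = 1 := by
    calc star a * (star b * (star u * (a * b)))
        = star a * (star u * (star b * (a * b))) := by
          rw [← mul_assoc (star b) (star u), hbu_s, mul_assoc]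
      _ = star u * (star a * ((star b * a) * b)) := by
          rw [← mul_assoc (star a) (star u), hau_s]; simp only [mul_assoc]
      _ = star u * (star a * (u * (a * star b) * b)) := by rw [hba]
      _ = star u * ((star a * u) * (a * (star b * b))) := by simp only [mul_assoc]
      _ = star u * (u * (star a * (a * 1))) := by rw [hau', hb]; simp only [mul_assoc]
      _ = star u * u * (star a * a) := by simp only [mul_one, mul_assoc]
      _ = 1 := by rw [hu2, ha, one_mul]
  have hqr : star b * (star a * (u * (b * a))) = 1 := by
    calc star b * (star a * (u * (b * a)))
        = star b * (star a * (b * (u * a))) := by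
          rw [← mul_assoc u b a, ← hbu, mul_assoc]
      _ = star b * ((star a * b) * (u * a)) := by simp only [mul_assoc]
      _ = star b * (star u * (b * star a) * (u * a)) := by rw [hab]
      _ = (star b * star u) * (b * ((star a * u) * a)) := by simp only [mul_assoc]
      _ = (star u * star b) * (b * (u * (star a * a))) := by rw [hbu_s, hau']; simp only [mul_assoc]
      _ = star u * ((star b * b) * u) := by rw [ha, mul_one]; simp only [mul_assoc]
      _ = 1 := by rw [hb, one_mul, hu2]
  have hqs : star b * (star a * (u * (star u * (a * b)))) = 1 := by
    rw [← mul_assoc u (star u), hu1, one_mul, ← mul_assoc (star a) a, ha, one_mul, hb]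
  have hDD : star D * D = 0 := by
    have : star D = star a * star b - star b * (star a * u) := by
      simp [hD, star_sub, star_mul, mul_assoc]
    rw [this, hD]
    simp only [sub_mul, mul_sub, mul_assoc, hpr, hps, hqr, hqs]
    abel
  have hD0 : D = 0 := by
    ext y
    have h1 : (inner ℂ (D y) (D y) : ℂ) = 0 := by
      rw [← adjoint_inner_left D y (D y)]
      have h2 : adjoint D (D y) = (star D * D) y := by rw [star_eq_adjoint]; rfl
      rw [h2, hDD]
      simp
    simpa using inner_self_eq_zero.mp h1
  exact sub_eq_zero.mp hD0

lemma aux_ker {H : Type*} [NormedAddCommGroup H] [InnerProductSpace ℂ H] [CompleteSpace H]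
    (a b u : H →L[ℂ] H)
    (hkey : b * a = star u * (a * b))
    (hau' : star a * u = u * star a)
    (x : H) (hx : star a x = 0) : star a (star b x) = 0 := by
  have h1 : star a * star b = star b * (u * star a) := by
    have := congrArg star hkey
    rw [star_mul, star_mul, star_mul, star_star] at this
    rw [this, mul_assoc, hau']
  calc star a (star b x) = (star a * star b) x := rfl
    _ = (star b) (u (star a x)) := by rw [h1]; rfl
    _ = 0 := by rw [hx]; simp

theorem stmt_5 {H : Type*} [NormedAddCommGroup H] [InnerProductSpace ℂ H] [CompleteSpace H]
    {n : ℕ} (U : Fin n → Fin n → (H →L[ℂ] H)) (V : Fin n → (H →L[ℂ] H))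
    (hUu : ∀ i j, i ≠ j → U i j * adjoint (U i j) = 1 ∧ adjoint (U i j) * U i j = 1)
    (hUsym : ∀ i j, i ≠ j → U j i = adjoint (U i j))
    (hUcomm : ∀ i j s t, i ≠ j → s ≠ t → U i j * U s t = U s t * U i j)
    (hViso : ∀ i, adjoint (V i) * V i = 1)
    (hVU : ∀ p s t, s ≠ t → V p * U s t = U s t * V p)
    (htw : ∀ i j, i ≠ j → adjoint (V i) * V j = adjoint (U i j) * (V j * adjoint (V i)))
    (A : Set (Fin n)) (j : Fin n) (hj : j ∉ A)
    (W : Submodule ℂ H) (hW : W = ⨅ i ∈ A, LinearMap.ker (adjoint (V i) : H →ₗ[ℂ] H)) :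
    W ⊓ (Submodule.map (V j).toLinearMap W)ᗮ = W ⊓ LinearMap.ker (adjoint (V j) : H →ₗ[ℂ] H) := by
  have hmemW : ∀ x : H, x ∈ W ↔ ∀ i ∈ A, adjoint (V i) x = 0 := by
    intro x
    simp [hW, Submodule.mem_iInf, LinearMap.mem_ker]
  -- derived facts for i ∈ A (so i ≠ j)
  have hkey : ∀ i, i ≠ j → ∀ x : H, adjoint (V i) x = 0 → adjoint (V i) (adjoint (V j) x) = 0 := by
    intro i hij x hx
    have hij' : i ≠ j := hij
    have hs : ∀ p, star (V p) = adjoint (V p) := fun p => star_eq_adjoint (V p)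
    have hsU : star (U i j) = adjoint (U i j) := star_eq_adjoint (U i j)
    have ha : star (V i) * V i = 1 := by rw [hs]; exact hViso i
    have hb : star (V j) * V j = 1 := by rw [hs]; exact hViso j
    have hu1 : U i j * star (U i j) = 1 := by rw [hsU]; exact (hUu i j hij').1
    have hu2 : star (U i j) * U i j = 1 := by rw [hsU]; exact (hUu i j hij').2
    have hau : V i * U i j = U i j * V i := hVU i i j hij'
    have hbu : V j * U i j = U i j * V j := hVU j i j hij'
    have hab : star (V i) * V j = star (U i j) * (V j * star (V i)) := by
      rw [hs, hsU]; exact htw i j hij'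
    have hba : star (V j) * V i = U i j * (V i * star (V j)) := by
      rw [hs]
      have := htw j i hij'.symm
      rwa [hUsym i j hij', adjoint_adjoint] at this
    have hk := aux_key (V i) (V j) (U i j) ha hb hu1 hu2 hau hbu hab hba
    have hau' := aux_comm_star (V i) (U i j) hu1 hu2 hau
    have := aux_ker (V i) (V j) (U i j) hk hau' x (by rw [hs]; exact hx)
    rwa [hs, hs] at this
  ext x
  simp only [Submodule.mem_inf]
  constructor
  · rintro ⟨hxW, hxO⟩
    refine ⟨hxW, ?_⟩
    rw [LinearMap.mem_ker]
    have hzW : adjoint (V j) x ∈ W := by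
      rw [hmemW]
      intro i hi
      exact hkey i (fun h => hj (h ▸ hi)) x ((hmemW x).mp hxW i hi)
    have hVz : (V j).toLinearMap (adjoint (V j) x) ∈ Submodule.map (V j).toLinearMap W :=
      Submodule.mem_map_of_mem hzW
    have h0 : (inner ℂ ((V j) (adjoint (V j) x)) x : ℂ) = 0 :=
      (Submodule.mem_orthogonal _ x).mp hxO _ hVz
    rw [← adjoint_inner_right] at h0
    exact inner_self_eq_zero.mp h0
  · rintro ⟨hxW, hxK⟩
    refine ⟨hxW, ?_⟩
    rw [Submodule.mem_orthogonal]
    rintro u hu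
    obtain ⟨z, hz, rfl⟩ := hu
    have : (inner ℂ ((V j) z) x : ℂ) = inner ℂ z (adjoint (V j) x) :=
      (adjoint_inner_right (V j) z x).symm
    rw [LinearMap.mem_ker] at hxK
    have hxK' : adjoint (V j) x = 0 := hxK
    simpa [hxK'] using this
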